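/- Under the bijection of the previous setting, if V is uniformly (Haar) distributed over the set 𝒰_{A=VB} of orthogonal matrices satisfying A = VB (A, B fixed N×m full-column-rank matrices), then Ṽ = (U_A^⊥)ᵀ V U_B^⊥ is Haar distributed over the orthogonal group O(N−m). -/

import Mathlib

open Matrix MeasureTheory

instance matrixMeasurableSpace {n m : Type*} : MeasurableSpace (Matrix n m ℝ) :=
  MeasurableSpace.pi (X := fun _ : n => m → ℝ)

section helpers
variable {m p : ℕ}

lemma parTpar (U : Matrix (Fin (m + p)) (Fin (m + p)) ℝ) (hU : Uᵀ * U = 1) :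
    (U.submatrix id (Fin.castAdd p))ᵀ * U.submatrix id (Fin.castAdd p) = 1 := by
  ext i j
  have h := congrFun (congrFun hU (Fin.castAdd p i)) (Fin.castAdd p j)
  simp only [Matrix.mul_apply, Matrix.transpose_apply, Matrix.one_apply,
    Matrix.submatrix_apply, id] at h ⊢
  rw [h]
  by_cases hij : i = j
  · simp [hij]
  · rw [if_neg hij, if_neg (fun hc => hij ((Fin.castAdd_injective m p) hc))]

lemma perpTperp (U : Matrix (Fin (m + p)) (Fin (m + p)) ℝ) (hU : Uᵀ * U = 1) :
    (U.submatrix id (Fin.natAdd m))ᵀ * U.submatrix id (Fin.natAdd m) = 1 := by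
  ext i j
  have h := congrFun (congrFun hU (Fin.natAdd m i)) (Fin.natAdd m j)
  simp only [Matrix.mul_apply, Matrix.transpose_apply, Matrix.one_apply,
    Matrix.submatrix_apply, id] at h ⊢
  rw [h]
  by_cases hij : i = j
  · simp [hij]
  · rw [if_neg hij, if_neg]
    intro hc
    exact hij (Fin.ext (by have := congrArg Fin.val hc; simpa using this))

lemma parTperp (U : Matrix (Fin (m + p)) (Fin (m + p)) ℝ) (hU : Uᵀ * U = 1) :
    (U.submatrix id (Fin.castAdd p))ᵀ * U.submatrix id (Fin.natAdd m) = 0 := by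
  ext i j
  have h := congrFun (congrFun hU (Fin.castAdd p i)) (Fin.natAdd m j)
  simp only [Matrix.mul_apply, Matrix.transpose_apply, Matrix.one_apply,
    Matrix.submatrix_apply, id, Matrix.zero_apply] at h ⊢
  rw [h, if_neg]
  intro hc
  have := congrArg Fin.val hc
  simp [Fin.castAdd, Fin.natAdd] at this
  omega

lemma parparT_add_perpperpT (U : Matrix (Fin (m + p)) (Fin (m + p)) ℝ) (hU : Uᵀ * U = 1) :
    U.submatrix id (Fin.castAdd p) * (U.submatrix id (Fin.castAdd p))ᵀ
      + U.submatrix id (Fin.natAdd m) * (U.submatrix id (Fin.natAdd m))ᵀ = 1 := by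
  have hU' : U * Uᵀ = 1 := mul_eq_one_comm.mp hU
  ext i j
  have h := congrFun (congrFun hU' i) j
  simp only [Matrix.mul_apply, Matrix.transpose_apply, Matrix.add_apply,
    Matrix.submatrix_apply, id] at h ⊢
  rw [← h, Fin.sum_univ_add]

lemma meas_entry {n m : ℕ} (i : Fin n) (j : Fin m) :
    Measurable fun V : Matrix (Fin n) (Fin m) ℝ => V i j :=
  (measurable_pi_apply j).comp (measurable_pi_apply (X := fun _ : Fin n => Fin m → ℝ) i)

lemma meas_mulLR {a b c d : ℕ} (M : Matrix (Fin a) (Fin b) ℝ) (N : Matrix (Fin c) (Fin d) ℝ) :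
    Measurable fun V : Matrix (Fin b) (Fin c) ℝ => M * V * N := by
  apply measurable_pi_lambda (X := fun _ : Fin a => Fin d → ℝ) _ fun i =>
    measurable_pi_lambda (X := fun _ : Fin d => ℝ) _ fun j => ?_
  simp only [Matrix.mul_apply]
  exact Finset.measurable_sum _ fun l _ => (Finset.measurable_sum _ fun k _ =>
    ((meas_entry k l).const_mul _)).mul_const _

lemma meas_mulR {b c d : ℕ} (N : Matrix (Fin c) (Fin d) ℝ) :
    Measurable fun V : Matrix (Fin b) (Fin c) ℝ => V * N := by
  apply measurable_pi_lambda (X := fun _ : Fin b => Fin d → ℝ) _ fun i =>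
    measurable_pi_lambda (X := fun _ : Fin d => ℝ) _ fun j => ?_
  simp only [Matrix.mul_apply]
  exact Finset.measurable_sum _ fun l _ => (meas_entry i l).mul_const _

lemma meas_orthset {n : ℕ} : MeasurableSet {W : Matrix (Fin n) (Fin n) ℝ | Wᵀ * W = 1} := by
  have : {W : Matrix (Fin n) (Fin n) ℝ | Wᵀ * W = 1}
      = ⋂ i, ⋂ j, {W | (Wᵀ * W) i j = (1 : Matrix (Fin n) (Fin n) ℝ) i j} := by
    ext W
    simp only [Set.mem_setOf_eq, Set.mem_iInter]
    constructor
    · intro h i j; rw [h]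
    · intro h; ext i j; exact h i j
  rw [this]
  refine MeasurableSet.iInter fun i => MeasurableSet.iInter fun j => ?_
  have : Measurable fun W : Matrix (Fin n) (Fin n) ℝ => (Wᵀ * W) i j := by
    simp only [Matrix.mul_apply, Matrix.transpose_apply]
    exact Finset.measurable_sum _ fun k _ => (meas_entry k i).mul (meas_entry k j)
  exact this (measurableSet_singleton _)

end helpers

/-- Conditional Haar: if V is uniformly distributed over the orthogonal matrices
satisfying A = VB (i.e. the law is carried by this set and invariant under right
multiplication by any orthogonal Q preserving the set), then
Ṽ = (U_A^⊥)ᵀ V U_B^⊥ is Haar distributed over O(N−m). -/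
theorem stmt_14 (m p : ℕ)
    (A B : Matrix (Fin (m + p)) (Fin m) ℝ)
    (hrankA : A.rank = m) (hrankB : B.rank = m)
    (UA UB : Matrix (Fin (m + p)) (Fin (m + p)) ℝ)
    (hUA : UAᵀ * UA = 1) (hUB : UBᵀ * UB = 1)
    (UApar : Matrix (Fin (m + p)) (Fin m) ℝ) (hUApar : UApar = UA.submatrix id (Fin.castAdd p))
    (UAperp : Matrix (Fin (m + p)) (Fin p) ℝ) (hUAperp : UAperp = UA.submatrix id (Fin.natAdd m))
    (UBpar : Matrix (Fin (m + p)) (Fin m) ℝ) (hUBpar : UBpar = UB.submatrix id (Fin.castAdd p))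
    (UBperp : Matrix (Fin (m + p)) (Fin p) ℝ) (hUBperp : UBperp = UB.submatrix id (Fin.natAdd m))
    (hspanA : LinearMap.range UApar.mulVecLin = LinearMap.range A.mulVecLin)
    (hspanB : LinearMap.range UBpar.mulVecLin = LinearMap.range B.mulVecLin)
    (hpar : ∀ V : Matrix (Fin (m + p)) (Fin (m + p)) ℝ,
      Vᵀ * V = 1 → A = V * B → UApar = V * UBpar)
    (μ : Measure (Matrix (Fin (m + p)) (Fin (m + p)) ℝ)) [IsProbabilityMeasure μ]
    -- μ is carried by the set 𝒰 = {V | V orthogonal, A = VB} (assumed nonempty)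
    (hne : ∃ V : Matrix (Fin (m + p)) (Fin (m + p)) ℝ, Vᵀ * V = 1 ∧ A = V * B)
    (hsupp : μ {V | ¬ (Vᵀ * V = 1 ∧ A = V * B)} = 0)
    -- uniformity: invariance under right multiplication by any orthogonal Q with QB = B
    (hinv : ∀ Q : Matrix (Fin (m + p)) (Fin (m + p)) ℝ, Qᵀ * Q = 1 → Q * B = B →
      Measure.map (fun V => V * Q) μ = μ) :
    IsProbabilityMeasure (Measure.map (fun V => UAperpᵀ * V * UBperp) μ) ∧
      (Measure.map (fun V => UAperpᵀ * V * UBperp) μ) {W | ¬ Wᵀ * W = 1} = 0 ∧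
      ∀ Qt : Matrix (Fin p) (Fin p) ℝ, Qtᵀ * Qt = 1 →
        Measure.map (fun W => W * Qt) (Measure.map (fun V => UAperpᵀ * V * UBperp) μ) =
          Measure.map (fun V => UAperpᵀ * V * UBperp) μ := by
  -- basic block identities
  have hPP : UBparᵀ * UBpar = 1 := by rw [hUBpar]; exact parTpar UB hUB
  have hRR : UBperpᵀ * UBperp = 1 := by rw [hUBperp]; exact perpTperp UB hUB
  have hPR : UBparᵀ * UBperp = 0 := by rw [hUBpar, hUBperp]; exact parTperp UB hUB
  have hRP : UBperpᵀ * UBpar = 0 := by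
    have := congrArg Matrix.transpose hPR
    simpa [Matrix.transpose_mul] using this
  have hBsum : UBpar * UBparᵀ + UBperp * UBperpᵀ = 1 := by
    rw [hUBpar, hUBperp]; exact parparT_add_perpperpT UB hUB
  have hAsum : UApar * UAparᵀ + UAperp * UAperpᵀ = 1 := by
    rw [hUApar, hUAperp]; exact parparT_add_perpperpT UA hUA
  have hf : Measurable fun V : Matrix (Fin (m+p)) (Fin (m+p)) ℝ => UAperpᵀ * V * UBperp :=
    meas_mulLR _ _
  -- B = UBpar * (UBparᵀ * B)
  have col : ∀ {a b c : ℕ} (M : Matrix (Fin a) (Fin b) ℝ) (N : Matrix (Fin b) (Fin c) ℝ)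
      (i : Fin a) (j : Fin c), (M * N) i j = (M *ᵥ fun k => N k j) i := fun M N i j => by
    simp [Matrix.mul_apply, Matrix.mulVec, dotProduct]
  have hB : UBpar * (UBparᵀ * B) = B := by
    ext i j
    obtain ⟨x, hx'⟩ : (fun i => B i j) ∈ LinearMap.range UBpar.mulVecLin := by
      rw [hspanB]
      refine ⟨Pi.single j 1, ?_⟩
      ext i
      simp [Matrix.mulVecLin_apply, Matrix.mulVec_single]
    have hx : UBpar *ᵥ x = fun i => B i j := hx'
    rw [col]
    have hcol2 : (fun k => (UBparᵀ * B) k j) = UBparᵀ *ᵥ fun k => B k j :=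
      funext fun k => col _ _ k j
    rw [hcol2, ← hx, Matrix.mulVec_mulVec x UBparᵀ UBpar, hPP, Matrix.one_mulVec, hx]
  -- algebra: good V gives orthogonal image
  have horth : ∀ V : Matrix (Fin (m+p)) (Fin (m+p)) ℝ, Vᵀ * V = 1 → A = V * B →
      (UAperpᵀ * V * UBperp)ᵀ * (UAperpᵀ * V * UBperp) = 1 := by
    intro V hV hA
    have h1 : Vᵀ * UApar = UBpar := by
      rw [hpar V hV hA, ← Matrix.mul_assoc, hV, Matrix.one_mul]
    have h1' : UAparᵀ * V = UBparᵀ := by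
      have := congrArg Matrix.transpose h1
      simpa [Matrix.transpose_mul] using this
    have h2 : UAperp * UAperpᵀ = 1 - UApar * UAparᵀ := eq_sub_of_add_eq' hAsum
    calc (UAperpᵀ * V * UBperp)ᵀ * (UAperpᵀ * V * UBperp)
        = UBperpᵀ * (Vᵀ * ((UAperp * UAperpᵀ) * (V * UBperp))) := by
          simp only [Matrix.transpose_mul, Matrix.transpose_transpose, Matrix.mul_assoc]
      _ = UBperpᵀ * (Vᵀ * ((1 - UApar * UAparᵀ) * (V * UBperp))) := by rw [h2]
      _ = UBperpᵀ * (Vᵀ * (V * UBperp)) -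
            UBperpᵀ * (Vᵀ * (UApar * (UAparᵀ * (V * UBperp)))) := by
          simp only [Matrix.sub_mul, Matrix.one_mul, Matrix.mul_sub, Matrix.mul_assoc]
      _ = 1 - 0 := by
          congr 1
          · rw [← Matrix.mul_assoc Vᵀ V, hV, Matrix.one_mul, hRR]
          · rw [← Matrix.mul_assoc Vᵀ UApar, h1, ← Matrix.mul_assoc UAparᵀ V, h1',
              hPR, Matrix.mul_zero, Matrix.mul_zero]
      _ = 1 := sub_zero 1
  refine ⟨Measure.isProbabilityMeasure_map hf.aemeasurable, ?_, ?_⟩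
  · -- support
    have hSm : MeasurableSet {W : Matrix (Fin p) (Fin p) ℝ | ¬ Wᵀ * W = 1} :=
      (meas_orthset (n := p)).compl
    rw [Measure.map_apply hf hSm]
    refine measure_mono_null ?_ hsupp
    intro V hV
    simp only [Set.mem_preimage, Set.mem_setOf_eq] at hV ⊢
    intro hgood
    exact hV (horth V hgood.1 hgood.2)
  · -- invariance
    intro Qt hQt
    set Q : Matrix (Fin (m+p)) (Fin (m+p)) ℝ := UBpar * UBparᵀ + UBperp * (Qt * UBperpᵀ) with hQdef
    have k1 : ∀ X : Matrix (Fin m) (Fin (m+p)) ℝ, UBparᵀ * (UBpar * X) = X := fun X => by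
      rw [← Matrix.mul_assoc, hPP, Matrix.one_mul]
    have k2 : ∀ X : Matrix (Fin p) (Fin (m+p)) ℝ, UBperpᵀ * (UBperp * X) = X := fun X => by
      rw [← Matrix.mul_assoc, hRR, Matrix.one_mul]
    have k3 : ∀ X : Matrix (Fin p) (Fin (m+p)) ℝ, UBparᵀ * (UBperp * X) = 0 := fun X => by
      rw [← Matrix.mul_assoc, hPR, Matrix.zero_mul]
    have k4 : ∀ X : Matrix (Fin m) (Fin (m+p)) ℝ, UBperpᵀ * (UBpar * X) = 0 := fun X => by
      rw [← Matrix.mul_assoc, hRP, Matrix.zero_mul]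
    have hQorth : Qᵀ * Q = 1 := by
      have hQT : Qᵀ = UBpar * UBparᵀ + UBperp * (Qtᵀ * UBperpᵀ) := by
        rw [hQdef]
        simp [Matrix.transpose_add, Matrix.transpose_mul, Matrix.transpose_transpose,
          Matrix.mul_assoc]
      rw [hQT, hQdef, Matrix.add_mul, Matrix.mul_add, Matrix.mul_add]
      simp only [Matrix.mul_assoc]
      rw [k1, k3, k4, k2, ← Matrix.mul_assoc Qtᵀ Qt, hQt, Matrix.one_mul]
      simp only [Matrix.mul_zero, add_zero, zero_add]
      exact hBsum
    have hQB : Q * B = B := by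
      rw [hQdef, Matrix.add_mul]
      have hRB : UBperpᵀ * B = 0 := by
        rw [← hB, ← Matrix.mul_assoc, hRP, Matrix.zero_mul]
      rw [Matrix.mul_assoc UBperp, Matrix.mul_assoc Qt, hRB, Matrix.mul_zero,
        Matrix.mul_zero, add_zero, Matrix.mul_assoc, hB]
    have hQR : Q * UBperp = UBperp * Qt := by
      rw [hQdef, Matrix.add_mul, Matrix.mul_assoc, hPR, Matrix.mul_zero,
        Matrix.mul_assoc, Matrix.mul_assoc, hRR, Matrix.mul_one, zero_add]
    have hfun : (fun V : Matrix (Fin (m+p)) (Fin (m+p)) ℝ => UAperpᵀ * (V * Q) * UBperp)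
        = fun V => (UAperpᵀ * V * UBperp) * Qt := by
      funext V
      calc UAperpᵀ * (V * Q) * UBperp = UAperpᵀ * (V * (Q * UBperp)) := by
            simp only [Matrix.mul_assoc]
        _ = UAperpᵀ * V * UBperp * Qt := by rw [hQR]; simp only [Matrix.mul_assoc]
    calc Measure.map (fun W => W * Qt) (Measure.map (fun V => UAperpᵀ * V * UBperp) μ)
        = Measure.map (fun V => (UAperpᵀ * V * UBperp) * Qt) μ := by
          rw [Measure.map_map (meas_mulR Qt) hf]
          rfl
      _ = Measure.map (fun V => UAperpᵀ * (V * Q) * UBperp) μ := by rw [hfun]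
      _ = Measure.map ((fun V => UAperpᵀ * V * UBperp) ∘ (fun V => V * Q)) μ := rfl
      _ = Measure.map (fun V => UAperpᵀ * V * UBperp) (Measure.map (fun V => V * Q) μ) := by
          rw [Measure.map_map hf (meas_mulR Q)]
      _ = Measure.map (fun V => UAperpᵀ * V * UBperp) μ := by rw [hinv Q hQorth hQB]
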